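/- Let n ≥ 3 and let F : ℝⁿ → ℝⁿ be a bijective map of class C¹ such that for all x, y ∈ ℝⁿ, x ≤ y if and only if F(x) ≤ F(y), where ≤ is the causal relation of n-dimensional Minkowski space. Then there exist a real number a > 0, an orthochronous Lorentz matrix A, and a vector b ∈ ℝⁿ such that F(x) = a • (A x) + b for all x ∈ ℝⁿ. -/

import Mathlib

open Finset

/-- The Minkowski quadratic form on `ℝⁿ`: `Q v = v₀² - ∑_{i=1}^{n-1} vᵢ²`. -/
def minkowskiQ {n : ℕ} [NeZero n] (v : Fin n → ℝ) : ℝ :=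
  (v 0) ^ 2 - ∑ i ∈ Finset.univ.erase (0 : Fin n), (v i) ^ 2

/-- The causal relation on `n`-dimensional Minkowski space:
`x ≤ y` iff `Q (y - x) ≥ 0` and `(y - x)₀ ≥ 0`. -/
def causalLE {n : ℕ} [NeZero n] (x y : Fin n → ℝ) : Prop :=
  0 ≤ minkowskiQ (y - x) ∧ 0 ≤ (y - x) 0

/-- A matrix is Lorentz if it preserves the Minkowski quadratic form. -/
def IsLorentz {n : ℕ} [NeZero n] (A : Matrix (Fin n) (Fin n) ℝ) : Prop :=
  ∀ v : Fin n → ℝ, minkowskiQ (A.mulVec v) = minkowskiQ v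

namespace Zeeman

variable {n : ℕ} [NeZero n]

/-- The Minkowski bilinear form. -/
def mB (u v : Fin n → ℝ) : ℝ :=
  u 0 * v 0 - ∑ i ∈ Finset.univ.erase (0 : Fin n), u i * v i

lemma mB_symm (u v : Fin n → ℝ) : mB u v = mB v u := by
  unfold mB; congr 1; · ring
  · exact Finset.sum_congr rfl fun i _ => by ring

lemma mQ_eq_mB (v : Fin n → ℝ) : minkowskiQ v = mB v v := by
  unfold minkowskiQ mB; congr 1; · ring
  · exact Finset.sum_congr rfl fun i _ => by ring

lemma mB_add_left (u v w : Fin n → ℝ) : mB (u + v) w = mB u w + mB v w := by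
  unfold mB
  rw [show ∑ i ∈ Finset.univ.erase (0 : Fin n), (u + v) i * w i
      = ∑ i ∈ Finset.univ.erase (0 : Fin n), (u i * w i + v i * w i) from
    Finset.sum_congr rfl fun i _ => by simp [add_mul], Finset.sum_add_distrib]
  simp only [Pi.add_apply]; ring

lemma mB_smul_left (a : ℝ) (u v : Fin n → ℝ) : mB (a • u) v = a * mB u v := by
  unfold mB
  rw [show ∑ i ∈ Finset.univ.erase (0 : Fin n), (a • u) i * v i
      = ∑ i ∈ Finset.univ.erase (0 : Fin n), a * (u i * v i) from
    Finset.sum_congr rfl fun i _ => by simp [mul_assoc], ← Finset.mul_sum]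
  simp only [Pi.smul_apply, smul_eq_mul]; ring

lemma mB_add_right (u v w : Fin n → ℝ) : mB u (v + w) = mB u v + mB u w := by
  rw [mB_symm, mB_add_left, mB_symm v, mB_symm w]

lemma mB_smul_right (a : ℝ) (u v : Fin n → ℝ) : mB u (a • v) = a * mB u v := by
  rw [mB_symm, mB_smul_left, mB_symm]

lemma mB_neg_left (u v : Fin n → ℝ) : mB (-u) v = - mB u v := by
  have := mB_smul_left (-1) u v; simpa using this

lemma mB_neg_right (u v : Fin n → ℝ) : mB u (-v) = - mB u v := by
  rw [mB_symm, mB_neg_left, mB_symm]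

lemma mB_sub_left (u v w : Fin n → ℝ) : mB (u - v) w = mB u w - mB v w := by
  rw [sub_eq_add_neg, mB_add_left, mB_neg_left]; ring

lemma mB_sub_right (u v w : Fin n → ℝ) : mB u (v - w) = mB u v - mB u w := by
  rw [mB_symm, mB_sub_left, mB_symm v, mB_symm w]

lemma mB_zero_left (v : Fin n → ℝ) : mB 0 v = 0 := by
  have := mB_smul_left 0 0 v; simpa using this

lemma mB_zero_right (v : Fin n → ℝ) : mB v 0 = 0 := by
  rw [mB_symm, mB_zero_left]

lemma mQ_add (u v : Fin n → ℝ) :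
    minkowskiQ (u + v) = minkowskiQ u + minkowskiQ v + 2 * mB u v := by
  rw [mQ_eq_mB, mQ_eq_mB, mQ_eq_mB, mB_add_left, mB_add_right, mB_add_right, mB_symm v u]
  ring

lemma mQ_smul (a : ℝ) (v : Fin n → ℝ) : minkowskiQ (a • v) = a ^ 2 * minkowskiQ v := by
  rw [mQ_eq_mB, mQ_eq_mB, mB_smul_left, mB_smul_right]; ring

lemma mQ_neg (v : Fin n → ℝ) : minkowskiQ (-v) = minkowskiQ v := by
  have := mQ_smul (-1) v; simpa using this

lemma mQ_zero : minkowskiQ (0 : Fin n → ℝ) = 0 := by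
  rw [mQ_eq_mB, mB_zero_left]

lemma mB_sum_left {ι : Type*} (s : Finset ι) (f : ι → (Fin n → ℝ)) (v : Fin n → ℝ) :
    mB (∑ j ∈ s, f j) v = ∑ j ∈ s, mB (f j) v := by
  classical
  induction s using Finset.induction with
  | empty => simp [mB_zero_left]
  | insert a s' h ih => rw [Finset.sum_insert h, mB_add_left, ih, Finset.sum_insert h]

lemma mB_sum_right {ι : Type*} (s : Finset ι) (f : ι → (Fin n → ℝ)) (v : Fin n → ℝ) :
    mB v (∑ j ∈ s, f j) = ∑ j ∈ s, mB v (f j) := by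
  rw [mB_symm, mB_sum_left]; exact Finset.sum_congr rfl fun j _ => mB_symm _ _



/-- membership in the forward cone -/
def Cone (v : Fin n → ℝ) : Prop := 0 ≤ minkowskiQ v ∧ 0 ≤ v 0

lemma causalLE_iff_cone (x y : Fin n → ℝ) : causalLE x y ↔ Cone (y - x) := Iff.rfl

lemma spatial_sq_nonneg (v : Fin n → ℝ) :
    0 ≤ ∑ i ∈ Finset.univ.erase (0 : Fin n), (v i) ^ 2 :=
  Finset.sum_nonneg fun i _ => sq_nonneg _

lemma cone_spatial (v : Fin n → ℝ) (h : Cone v) :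
    ∑ i ∈ Finset.univ.erase (0 : Fin n), (v i) ^ 2 ≤ (v 0) ^ 2 := by
  have := h.1; unfold minkowskiQ at this; linarith

lemma mB_expand (u v : Fin n → ℝ) :
    mB u v = u 0 * v 0 - ∑ i ∈ Finset.univ.erase (0 : Fin n), u i * v i := by
  have h := mQ_add u v
  unfold minkowskiQ at h
  have e : ∀ i, (u i + v i) ^ 2 = u i ^ 2 + v i ^ 2 + 2 * (u i * v i) := fun i => by ring
  rw [show ∑ i ∈ Finset.univ.erase (0 : Fin n), ((u + v) i) ^ 2
      = (∑ i ∈ Finset.univ.erase (0 : Fin n), u i ^ 2)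
        + (∑ i ∈ Finset.univ.erase (0 : Fin n), v i ^ 2)
        + 2 * ∑ i ∈ Finset.univ.erase (0 : Fin n), u i * v i from by
    rw [Finset.mul_sum, ← Finset.sum_add_distrib, ← Finset.sum_add_distrib]
    exact Finset.sum_congr rfl fun i _ => by simp only [Pi.add_apply]; ring] at h
  have h2 : (u 0 + v 0) ^ 2 = u 0 ^ 2 + v 0 ^ 2 + 2 * (u 0 * v 0) := by ring
  simp only [Pi.add_apply] at h
  linarith

lemma mB_nonneg_of_cone {u v : Fin n → ℝ} (hu : Cone u) (hv : Cone v) : 0 ≤ mB u v := by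
  have hcs := Finset.sum_mul_sq_le_sq_mul_sq (Finset.univ.erase (0 : Fin n)) u v
  have h1 := cone_spatial u hu
  have h2 := cone_spatial v hv
  have h3 := spatial_sq_nonneg u
  have h4 := spatial_sq_nonneg v
  rw [mB_expand]
  nlinarith [hu.2, hv.2, mul_nonneg hu.2 hv.2,
    sq_nonneg (∑ i ∈ Finset.univ.erase (0 : Fin n), u i * v i)]

lemma cone_add {u v : Fin n → ℝ} (hu : Cone u) (hv : Cone v) : Cone (u + v) := by
  constructor
  · rw [mQ_add]; have := mB_nonneg_of_cone hu hv; linarith [hu.1, hv.1]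
  · have := hu.2; have := hv.2; simp only [Pi.add_apply]; linarith

lemma causalLE_trans {x y z : Fin n → ℝ} (h1 : causalLE x y) (h2 : causalLE y z) :
    causalLE x z := by
  rw [causalLE_iff_cone] at *
  have := cone_add h1 h2
  rwa [show y - x + (z - y) = z - x from by abel] at this

lemma eq_zero_of_cone_of_cone_neg {v : Fin n → ℝ} (h : Cone v) (h' : Cone (-v)) : v = 0 := by
  have h0 : v 0 = 0 := by
    have := h.2; have h2 := h'.2; simp only [Pi.neg_apply] at h2; linarith
  have hq := h.1
  unfold minkowskiQ at hq
  rw [h0] at hq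
  have hsum : ∑ i ∈ Finset.univ.erase (0 : Fin n), (v i) ^ 2 = 0 := by
    have := spatial_sq_nonneg v; nlinarith
  funext i
  by_cases hi : i = 0
  · rw [hi]; exact h0
  · have := (Finset.sum_eq_zero_iff_of_nonneg (fun j _ => sq_nonneg (v j))).1 hsum i
      (Finset.mem_erase.2 ⟨hi, Finset.mem_univ i⟩)
    have : v i = 0 := by nlinarith
    exact this

lemma null_comp0_ne {v : Fin n → ℝ} (hq : minkowskiQ v = 0) (hv : v ≠ 0) : v 0 ≠ 0 := by
  intro h0
  apply hv
  unfold minkowskiQ at hq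
  rw [h0] at hq
  have hsum : ∑ i ∈ Finset.univ.erase (0 : Fin n), (v i) ^ 2 = 0 := by nlinarith
  funext i
  by_cases hi : i = 0
  · rw [hi]; exact h0
  · have := (Finset.sum_eq_zero_iff_of_nonneg (fun j _ => sq_nonneg (v j))).1 hsum i
      (Finset.mem_erase.2 ⟨hi, Finset.mem_univ i⟩)
    have : v i = 0 := by nlinarith
    exact this

/-- two null vectors with vanishing inner product are parallel -/
lemma null_parallel {u v : Fin n → ℝ} (hu : minkowskiQ u = 0) (hv : minkowskiQ v = 0)
    (hb : mB u v = 0) (hvne : v ≠ 0) : u = (u 0 / v 0) • v := by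
  have hv0 := null_comp0_ne hv hvne
  have htv : (u 0 / v 0) * v 0 = u 0 := by field_simp
  have hq1 : ∑ i ∈ Finset.univ.erase (0 : Fin n), (u i) ^ 2 = u 0 ^ 2 := by
    unfold minkowskiQ at hu; linarith
  have hq2 : ∑ i ∈ Finset.univ.erase (0 : Fin n), (v i) ^ 2 = v 0 ^ 2 := by
    unfold minkowskiQ at hv; linarith
  have hq3 : ∑ i ∈ Finset.univ.erase (0 : Fin n), u i * v i = u 0 * v 0 := by
    rw [mB_expand] at hb; linarith
  have hsum : ∑ i ∈ Finset.univ.erase (0 : Fin n), (u i - (u 0 / v 0) * v i) ^ 2 = 0 := by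
    have expand : ∑ i ∈ Finset.univ.erase (0 : Fin n), (u i - (u 0 / v 0) * v i) ^ 2
        = (∑ i ∈ Finset.univ.erase (0 : Fin n), u i ^ 2)
          - (2 * (u 0 / v 0)) * (∑ i ∈ Finset.univ.erase (0 : Fin n), u i * v i)
          + (u 0 / v 0) ^ 2 * (∑ i ∈ Finset.univ.erase (0 : Fin n), v i ^ 2) := by
      rw [Finset.mul_sum, Finset.mul_sum, ← Finset.sum_sub_distrib, ← Finset.sum_add_distrib]
      exact Finset.sum_congr rfl fun i _ => by ring
    rw [expand, hq1, hq2, hq3]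
    nlinarith [htv]
  funext i
  simp only [Pi.smul_apply, smul_eq_mul]
  by_cases hi : i = 0
  · rw [hi]; linarith [htv]
  · have := (Finset.sum_eq_zero_iff_of_nonneg (fun j _ => sq_nonneg _)).1 hsum i
      (Finset.mem_erase.2 ⟨hi, Finset.mem_univ i⟩)
    have h5 : u i - (u 0 / v 0) * v i = 0 := by nlinarith
    linarith

lemma null_nonparallel_mB_ne {u v : Fin n → ℝ} (hu : minkowskiQ u = 0)
    (hv : minkowskiQ v = 0) (hvne : v ≠ 0) (hnp : ∀ t : ℝ, u ≠ t • v) : mB u v ≠ 0 :=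
  fun hb => hnp _ (null_parallel hu hv hb hvne)

/-- a vector orthogonal to a nonzero null vector and not parallel to it is spacelike -/
lemma spacelike_of_perp_null {v ℓ : Fin n → ℝ} (hl : minkowskiQ ℓ = 0) (hlne : ℓ ≠ 0)
    (hb : mB v ℓ = 0) (hnp : ∀ t : ℝ, v ≠ t • ℓ) : minkowskiQ v < 0 := by
  rcases lt_trichotomy (minkowskiQ v) 0 with h | h | h
  · exact h
  · exact absurd (null_parallel h hl hb hlne) (hnp _)
  · exfalso
    have hl0 := null_comp0_ne hl hlne
    have hv0 : ∑ i ∈ Finset.univ.erase (0 : Fin n), (v i) ^ 2 < v 0 ^ 2 := by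
      unfold minkowskiQ at h; linarith
    have hl2 : ∑ i ∈ Finset.univ.erase (0 : Fin n), (ℓ i) ^ 2 = ℓ 0 ^ 2 := by
      unfold minkowskiQ at hl; linarith
    have hq3 : ∑ i ∈ Finset.univ.erase (0 : Fin n), v i * ℓ i = v 0 * ℓ 0 := by
      rw [mB_expand] at hb; linarith
    have hcs := Finset.sum_mul_sq_le_sq_mul_sq (Finset.univ.erase (0 : Fin n)) v ℓ
    rw [hq3, hl2] at hcs
    have hsq : 0 < ℓ 0 ^ 2 := by
      rcases lt_or_gt_of_ne hl0 with hc | hc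
      · nlinarith
      · nlinarith
    nlinarith [mul_lt_mul_of_pos_right hv0 hsq, sq_nonneg (v 0 * ℓ 0)]

lemma comparable_of_null {x y : Fin n → ℝ} (h : minkowskiQ (y - x) = 0) :
    causalLE x y ∨ causalLE y x := by
  rcases le_total 0 ((y - x) 0) with h0 | h0
  · exact Or.inl ⟨le_of_eq h.symm, h0⟩
  · right
    constructor
    · rw [show x - y = -(y - x) from by abel, mQ_neg]; exact le_of_eq h.symm
    · simp only [Pi.sub_apply] at *; linarith


/-- sum of two cone vectors being null forces both null and orthogonal -/
lemma null_sum_decomp {u v : Fin n → ℝ} (hu : Cone u) (hv : Cone v)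
    (h : minkowskiQ (u + v) = 0) :
    minkowskiQ u = 0 ∧ minkowskiQ v = 0 ∧ mB u v = 0 := by
  have hq := mQ_add u v
  have hb := mB_nonneg_of_cone hu hv
  constructor
  · linarith [hu.1, hv.1]
  constructor
  · linarith [hu.1, hv.1]
  · linarith [hu.1, hv.1]

lemma cone_null_sum_parallel {u v : Fin n → ℝ} (hu : Cone u) (hv : Cone v)
    (h : minkowskiQ (u + v) = 0) : ∃ s : ℝ, u = s • (u + v) := by
  by_cases hz : u + v = 0
  · refine ⟨0, ?_⟩
    rw [hz, smul_zero]
    have : v = -u := by rw [← neg_eq_iff_eq_neg]; ext i; have := congrFun hz i; simp at this ⊢; linarith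
    rw [this] at hv
    exact eq_zero_of_cone_of_cone_neg hu hv
  · obtain ⟨h1, h2, h3⟩ := null_sum_decomp hu hv h
    by_cases huz : u = 0
    · exact ⟨0, by rw [huz, zero_smul]⟩
    · have hb : mB u (u + v) = 0 := by
        have e1 : mB (u + v) u = mB u u + mB v u := mB_add_left u v u
        have e2 : mB u u = 0 := by rw [← mQ_eq_mB]; exact h1
        have e3 : mB v u = 0 := by rw [mB_symm]; exact h3
        rw [mB_symm, e1, e2, e3]; ring
      exact ⟨u 0 / (u + v) 0, null_parallel h1 h hb hz⟩



-- chunk c : basis vectors, lightlike characterization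
def ee (j : Fin n) : Fin n → ℝ := fun i => if j = i then 1 else 0

lemma ee_apply_self (j : Fin n) : ee j j = 1 := by simp [ee]

lemma ee_apply_ne {j i : Fin n} (h : j ≠ i) : ee j i = 0 := by simp [ee, h]

lemma mB_ee (v : Fin n → ℝ) (j : Fin n) :
    mB v (ee j) = if j = 0 then v 0 else -(v j) := by
  rw [mB_expand]
  by_cases hj : j = 0
  · subst hj
    rw [if_pos rfl, show (∑ i ∈ Finset.univ.erase (0 : Fin n), v i * ee 0 i) = 0 from
      Finset.sum_eq_zero fun i hi => by
        rw [ee_apply_ne (Ne.symm (Finset.mem_erase.1 hi).1), mul_zero]]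
    rw [ee_apply_self]; ring
  · rw [if_neg hj]
    have : ∑ i ∈ Finset.univ.erase (0 : Fin n), v i * ee j i = v j := by
      rw [Finset.sum_eq_single j]
      · rw [ee_apply_self, mul_one]
      · intro i _ hij; rw [ee_apply_ne (Ne.symm hij), mul_zero]
      · intro h; exact absurd (Finset.mem_erase.2 ⟨hj, Finset.mem_univ j⟩) h
    rw [this, ee_apply_ne hj]; ring

lemma mQ_ee_ne_zero {j : Fin n} (hj : j ≠ 0) : minkowskiQ (ee j) = -1 := by
  rw [mQ_eq_mB, mB_ee, if_neg hj, ee_apply_self]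

lemma ee_comp0_ne_zero {j : Fin n} (hj : j ≠ 0) : ee j 0 = 0 := ee_apply_ne hj

lemma mB_ee_zero (v : Fin n → ℝ) : mB v (ee 0) = v 0 := by rw [mB_ee, if_pos rfl]

lemma mQ_ee_zero : minkowskiQ (ee (0 : Fin n)) = 1 := by
  rw [mQ_eq_mB, mB_ee_zero, ee_apply_self]

/-- nonzero nullity relation -/
def lightlike (x y : Fin n → ℝ) : Prop := x ≠ y ∧ minkowskiQ (y - x) = 0

/-- causally related (distinct and comparable) -/
def related (x y : Fin n → ℝ) : Prop := x ≠ y ∧ (causalLE x y ∨ causalLE y x)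

def between (x y z : Fin n → ℝ) : Prop :=
  (causalLE x z ∧ causalLE z y) ∨ (causalLE y z ∧ causalLE z x)

/-- the purely order-theoretic property characterizing lightlike pairs -/
def chainProp (x y : Fin n → ℝ) : Prop :=
  x ≠ y ∧ (causalLE x y ∨ causalLE y x) ∧
    ∀ z w, between x y z → between x y w → (causalLE z w ∨ causalLE w z)

lemma lightlike_symm {x y : Fin n → ℝ} (h : lightlike x y) : lightlike y x :=
  ⟨h.1.symm, by rw [show x - y = -(y - x) from by abel, mQ_neg]; exact h.2⟩

lemma lightlike_trans_collinear {x y z : Fin n → ℝ} (hxy : lightlike x y)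
    (hyz : lightlike y z) (hxz : lightlike x z) : ∃ t : ℝ, z - y = t • (y - x) := by
  have h1 : minkowskiQ (y - x) = 0 := hxy.2
  have h2 : minkowskiQ (z - y) = 0 := hyz.2
  have h3 : minkowskiQ (z - x) = 0 := hxz.2
  have hb : mB (z - y) (y - x) = 0 := by
    have hadd := mQ_add (z - y) (y - x)
    rw [show z - y + (y - x) = z - x from by abel, h3, h2, h1] at hadd
    linarith
  have hyx : y - x ≠ 0 := fun h => hxy.1 (by rwa [sub_eq_zero, eq_comm] at h)
  exact ⟨_, null_parallel h2 h1 hb hyx⟩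

lemma between_mem_line {x y z : Fin n → ℝ} (hl : minkowskiQ (y - x) = 0)
    (hz : between x y z) : ∃ s : ℝ, z - x = s • (y - x) := by
  rcases hz with ⟨h1, h2⟩ | ⟨h1, h2⟩
  · rw [causalLE_iff_cone] at h1 h2
    have hs := cone_null_sum_parallel h1 h2 (by
      rw [show z - x + (y - z) = y - x from by abel]; exact hl)
    rw [show z - x + (y - z) = y - x from by abel] at hs
    exact hs
  · rw [causalLE_iff_cone] at h1 h2
    have hl' : minkowskiQ (x - y) = 0 := by
      rw [show x - y = -(y - x) from by abel, mQ_neg]; exact hl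
    have hs := cone_null_sum_parallel h1 h2 (by
      rw [show z - y + (x - z) = x - y from by abel]; exact hl')
    rw [show z - y + (x - z) = x - y from by abel] at hs
    obtain ⟨s, hs⟩ := hs
    refine ⟨1 - s, ?_⟩
    rw [show z - x = (z - y) + (y - x) from by abel, hs,
      show x - y = -(y - x) from by abel]
    module

lemma lightlike_chainProp {x y : Fin n → ℝ} (h : lightlike x y) : chainProp x y := by
  refine ⟨h.1, comparable_of_null h.2, fun z w hz hw => ?_⟩
  obtain ⟨s, hs⟩ := between_mem_line h.2 hz
  obtain ⟨t, ht⟩ := between_mem_line h.2 hw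
  apply comparable_of_null
  rw [show w - z = (w - x) - (z - x) from by abel, hs, ht, ← sub_smul, mQ_smul, h.2]
  ring

lemma chainProp_symm {x y : Fin n → ℝ} (h : chainProp x y) : chainProp y x := by
  refine ⟨h.1.symm, h.2.1.symm, fun z w hz hw => ?_⟩
  exact h.2.2 z w hz.symm hw.symm

/-- key construction: a strictly timelike interval contains incomparable points -/
lemma chainProp_null_aux {x y : Fin n → ℝ} (i₁ : Fin n) (hi₁ : i₁ ≠ 0)
    (hle : causalLE x y) (hne : x ≠ y) (h : chainProp x y) : minkowskiQ (y - x) = 0 := by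
  by_contra hq
  set v := y - x with hv
  have hcone : Cone v := (causalLE_iff_cone x y).1 hle
  have hqpos : 0 < minkowskiQ v := lt_of_le_of_ne hcone.1 (fun hh => hq hh.symm)
  have hv0 : 0 < v 0 := by
    rcases lt_or_eq_of_le hcone.2 with h' | h'
    · exact h'
    · exfalso
      unfold minkowskiQ at hqpos
      rw [← h'] at hqpos
      nlinarith [spatial_sq_nonneg v]
  set q := minkowskiQ v with hqdef
  set c := |v i₁| with hc
  set ε := min 1 (q / (8 * (c + 1))) with he
  have hcpos : 0 < c + 1 := by positivity
  have hε : 0 < ε := lt_min one_pos (by positivity)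
  have hε1 : ε ≤ 1 := min_le_left _ _
  have hε2 : ε ≤ q / (8 * (c + 1)) := min_le_right _ _
  have hbound : ε * (c + ε) < q / 4 := by
    have h1 : ε * (c + ε) ≤ ε * (c + 1) := by nlinarith
    have h2 : ε * (c + 1) ≤ q / 8 := by
      have h3 := mul_le_mul_of_nonneg_right hε2 (le_of_lt hcpos)
      have h4 : q / (8 * (c + 1)) * (c + 1) = q / 8 := by field_simp
      rw [h4] at h3; exact h3
    nlinarith
  -- the two middle points
  set z := x + (1/2 : ℝ) • v + ε • ee i₁ with hz
  set w := x + (1/2 : ℝ) • v - ε • ee i₁ with hw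
  have hQe := mQ_ee_ne_zero hi₁
  have hBe : mB v (ee i₁) = -(v i₁) := by rw [mB_ee, if_neg hi₁]
  have he0 := ee_comp0_ne_zero hi₁
  have key : ∀ δ : ℝ, |δ| = ε →
      causalLE x (x + (1/2 : ℝ) • v + δ • ee i₁) ∧
      causalLE (x + (1/2 : ℝ) • v + δ • ee i₁) y := by
    intro δ hδ
    have hδc : δ * v i₁ ≤ ε * c ∧ -(ε * c) ≤ δ * v i₁ := by
      constructor
      · calc δ * v i₁ ≤ |δ * v i₁| := le_abs_self _
          _ = ε * c := by rw [abs_mul, hδ, hc]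
      · calc -(ε * c) = -|δ * v i₁| := by rw [abs_mul, hδ, hc]
          _ ≤ δ * v i₁ := neg_abs_le _
    have hδ2 : δ ^ 2 = ε ^ 2 := by rw [← sq_abs, hδ]
    constructor
    · constructor
      · rw [show x + (1/2:ℝ) • v + δ • ee i₁ - x = (1/2:ℝ) • v + δ • ee i₁ from by abel,
          mQ_add, mQ_smul, mQ_smul, mB_smul_left, mB_smul_right, hQe, hBe]
        nlinarith [hδc.1, hδc.2, hbound, hε]
      · rw [show x + (1/2:ℝ) • v + δ • ee i₁ - x = (1/2:ℝ) • v + δ • ee i₁ from by abel]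
        simp only [Pi.add_apply, Pi.smul_apply, smul_eq_mul, he0]
        linarith
    · constructor
      · rw [show y - (x + (1/2:ℝ) • v + δ • ee i₁) = (1/2:ℝ) • v + (-δ) • ee i₁ from by
          rw [hv]; module, mQ_add, mQ_smul, mQ_smul, mB_smul_left, mB_smul_right, hQe, hBe]
        nlinarith [hδc.1, hδc.2, hbound, hε]
      · rw [show y - (x + (1/2:ℝ) • v + δ • ee i₁) = (1/2:ℝ) • v + (-δ) • ee i₁ from by
          rw [hv]; module]
        simp only [Pi.add_apply, Pi.smul_apply, smul_eq_mul, he0]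
        linarith
  have hzb : between x y z := Or.inl ((key ε (abs_of_pos hε)).imp id id)
  have hwb : between x y w := by
    have := key (-ε) (by rw [abs_neg, abs_of_pos hε])
    refine Or.inl ?_
    rw [hw, show x + (1/2:ℝ) • v - ε • ee i₁ = x + (1/2:ℝ) • v + (-ε) • ee i₁ from by module]
    exact this
  have hcomp := h.2.2 z w hzb hwb
  have hwz : w - z = (-(2*ε)) • ee i₁ := by rw [hz, hw]; module
  have hQwz : minkowskiQ (w - z) < 0 := by
    rw [hwz, mQ_smul, hQe]; nlinarith
  rcases hcomp with hc' | hc'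
  · exact absurd hc'.1 (not_le.2 hQwz)
  · have hzw : minkowskiQ (z - w) < 0 := by
      rw [show z - w = -(w - z) from by abel, mQ_neg]; exact hQwz
    exact absurd hc'.1 (not_le.2 hzw)

lemma chainProp_lightlike {x y : Fin n → ℝ} (i₁ : Fin n) (hi₁ : i₁ ≠ 0)
    (h : chainProp x y) : lightlike x y := by
  refine ⟨h.1, ?_⟩
  rcases h.2.1 with hle | hle
  · exact chainProp_null_aux i₁ hi₁ hle h.1 h
  · have := chainProp_null_aux i₁ hi₁ hle h.1.symm (chainProp_symm h)
    rw [show y - x = -(x - y) from by abel, mQ_neg]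
    exact this

lemma lightlike_iff_chainProp {x y : Fin n → ℝ} (i₁ : Fin n) (hi₁ : i₁ ≠ 0) :
    lightlike x y ↔ chainProp x y :=
  ⟨lightlike_chainProp, chainProp_lightlike i₁ hi₁⟩

-- chunk d : light-line geometry of a causal isomorphism
section Fsection

variable {F : (Fin n → ℝ) → (Fin n → ℝ)}

lemma related_map (hbij : Function.Bijective F)
    (hcaus : ∀ x y : Fin n → ℝ, causalLE x y ↔ causalLE (F x) (F y))
    (x y : Fin n → ℝ) : related x y ↔ related (F x) (F y) := by
  constructor
  · rintro ⟨h1, h2⟩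
    exact ⟨fun h => h1 (hbij.injective h), h2.imp (hcaus x y).1 (hcaus y x).1⟩
  · rintro ⟨h1, h2⟩
    exact ⟨fun h => h1 (congrArg F h), h2.imp (hcaus x y).2 (hcaus y x).2⟩

lemma between_map (hcaus : ∀ x y : Fin n → ℝ, causalLE x y ↔ causalLE (F x) (F y))
    (x y z : Fin n → ℝ) : between x y z ↔ between (F x) (F y) (F z) := by
  unfold between
  rw [hcaus x z, hcaus z y, hcaus y z, hcaus z x]

lemma chainProp_map (hbij : Function.Bijective F)
    (hcaus : ∀ x y : Fin n → ℝ, causalLE x y ↔ causalLE (F x) (F y))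
    (x y : Fin n → ℝ) : chainProp x y ↔ chainProp (F x) (F y) := by
  constructor
  · rintro ⟨h1, h2, h3⟩
    refine ⟨fun h => h1 (hbij.injective h), h2.imp (hcaus x y).1 (hcaus y x).1, ?_⟩
    intro z' w' hz hw
    obtain ⟨z, rfl⟩ := hbij.surjective z'
    obtain ⟨w, rfl⟩ := hbij.surjective w'
    rw [← between_map hcaus] at hz hw
    exact (h3 z w hz hw).imp (hcaus z w).1 (hcaus w z).1
  · rintro ⟨h1, h2, h3⟩
    refine ⟨fun h => h1 (congrArg F h), h2.imp (hcaus x y).2 (hcaus y x).2, ?_⟩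
    intro z w hz hw
    rw [between_map hcaus] at hz hw
    exact (h3 (F z) (F w) hz hw).imp (hcaus z w).2 (hcaus w z).2

lemma lightlike_map (hn : 3 ≤ n) (hbij : Function.Bijective F)
    (hcaus : ∀ x y : Fin n → ℝ, causalLE x y ↔ causalLE (F x) (F y))
    (x y : Fin n → ℝ) : lightlike x y ↔ lightlike (F x) (F y) := by
  have hi₁ : (⟨1, by omega⟩ : Fin n) ≠ 0 := by
    intro h; have := congrArg Fin.val h; simp at this
  rw [lightlike_iff_chainProp (⟨1, by omega⟩ : Fin n) hi₁,
    lightlike_iff_chainProp (⟨1, by omega⟩ : Fin n) hi₁]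
  exact chainProp_map hbij hcaus x y

lemma lightlike_shift {x : Fin n → ℝ} {ℓ : Fin n → ℝ} (hℓ : minkowskiQ ℓ = 0)
    (hℓne : ℓ ≠ 0) {t : ℝ} (ht : t ≠ 0) : lightlike x (x + t • ℓ) := by
  refine ⟨?_, ?_⟩
  · intro h
    have : t • ℓ = 0 := by
      have := congrArg (fun u => u - x) h; simpa using this.symm
    exact hℓne ((smul_eq_zero.1 this).resolve_left ht)
  · rw [show x + t • ℓ - x = t • ℓ from by abel, mQ_smul, hℓ]; ring

/-- direction of the image of the light line through `x` with direction `ℓ` -/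
def mdir (F : (Fin n → ℝ) → (Fin n → ℝ)) (x ℓ : Fin n → ℝ) : Fin n → ℝ :=
  F (x + ℓ) - F x

lemma mdir_lightlike (hn : 3 ≤ n) (hbij : Function.Bijective F)
    (hcaus : ∀ x y : Fin n → ℝ, causalLE x y ↔ causalLE (F x) (F y))
    {x ℓ : Fin n → ℝ} (hℓ : minkowskiQ ℓ = 0) (hℓne : ℓ ≠ 0) :
    mdir F x ℓ ≠ 0 ∧ minkowskiQ (mdir F x ℓ) = 0 := by
  have h1 : lightlike x (x + ℓ) := by
    have := lightlike_shift (x := x) hℓ hℓne (t := (1:ℝ)) one_ne_zero; simpa using this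
  have h2 := (lightlike_map hn hbij hcaus x (x + ℓ)).1 h1
  exact ⟨fun h => h2.1 (sub_eq_zero.1 h).symm, h2.2⟩

/-- the image of a light line is contained in a light line -/
lemma line_image (hn : 3 ≤ n) (hbij : Function.Bijective F)
    (hcaus : ∀ x y : Fin n → ℝ, causalLE x y ↔ causalLE (F x) (F y))
    {x ℓ : Fin n → ℝ} (hℓ : minkowskiQ ℓ = 0) (hℓne : ℓ ≠ 0) (t : ℝ) :
    ∃ c : ℝ, F (x + t • ℓ) = F x + c • mdir F x ℓ := by
  by_cases ht0 : t = 0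
  · exact ⟨0, by rw [ht0]; simp⟩
  by_cases ht1 : t = 1
  · exact ⟨1, by rw [ht1]; simp [mdir]⟩
  have l12 : lightlike (F x) (F (x + ℓ)) := by
    have := (lightlike_map hn hbij hcaus x (x + ℓ)).1 (by
      have := lightlike_shift (x := x) hℓ hℓne (t := (1:ℝ)) one_ne_zero; simpa using this)
    exact this
  have l13 : lightlike (F x) (F (x + t • ℓ)) :=
    (lightlike_map hn hbij hcaus _ _).1 (lightlike_shift hℓ hℓne ht0)
  have l23 : lightlike (F (x + ℓ)) (F (x + t • ℓ)) := by
    refine (lightlike_map hn hbij hcaus _ _).1 ?_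
    have := lightlike_shift (x := x + ℓ) hℓ hℓne (t := t - 1) (sub_ne_zero.2 ht1)
    rwa [show x + ℓ + (t - 1) • ℓ = x + t • ℓ from by module] at this
  obtain ⟨τ, hτ⟩ := lightlike_trans_collinear l12 l23 l13
  refine ⟨1 + τ, ?_⟩
  have : F (x + t • ℓ) - F (x + ℓ) = τ • (F (x + ℓ) - F x) := hτ
  rw [show F x + (1 + τ) • mdir F x ℓ
      = F (x + ℓ) + τ • (F (x + ℓ) - F x) from by unfold mdir; module, ← this]
  abel

/-- the image of a light line is onto the image light line -/
lemma line_image_onto (hn : 3 ≤ n) (hbij : Function.Bijective F)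
    (hcaus : ∀ x y : Fin n → ℝ, causalLE x y ↔ causalLE (F x) (F y))
    {x ℓ : Fin n → ℝ} (hℓ : minkowskiQ ℓ = 0) (hℓne : ℓ ≠ 0) (c : ℝ) :
    ∃ t : ℝ, F (x + t • ℓ) = F x + c • mdir F x ℓ := by
  by_cases hc0 : c = 0
  · exact ⟨0, by rw [hc0]; simp⟩
  by_cases hc1 : c = 1
  · exact ⟨1, by rw [hc1]; simp [mdir]⟩
  obtain ⟨hmne, hmq⟩ := mdir_lightlike hn hbij hcaus (x := x) hℓ hℓne
  set m := mdir F x ℓ with hm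
  set q := F x + c • m with hq
  obtain ⟨p, hp⟩ := hbij.surjective q
  have lq1 : lightlike (F x) q := by
    refine ⟨?_, ?_⟩
    · intro h
      have : c • m = 0 := by
        have := congrArg (fun u => u - F x) h; simpa [hq] using this.symm
      exact hmne ((smul_eq_zero.1 this).resolve_left hc0)
    · rw [hq, show F x + c • m - F x = c • m from by abel, mQ_smul, hmq]; ring
  have lq2 : lightlike (F (x + ℓ)) q := by
    refine ⟨?_, ?_⟩
    · intro h
      have h2 : F (x + ℓ) = F x + m := by unfold mdir at hm; rw [hm]; abel
      rw [h2] at h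
      have : (c - 1) • m = 0 := by
        have := congrArg (fun u => u - F x - m) h
        simp only [hq] at this
        rw [show F x + c • m - F x - m = (c-1) • m from by module] at this
        rw [← this]; abel
      exact hmne ((smul_eq_zero.1 this).resolve_left (sub_ne_zero.2 hc1))
    · have h2 : F (x + ℓ) = F x + m := by unfold mdir at hm; rw [hm]; abel
      rw [hq, h2, show F x + c • m - (F x + m) = (c - 1) • m from by module,
        mQ_smul, hmq]; ring
  -- pull back to the line
  have lp1 : lightlike x p := by
    have := (lightlike_map hn hbij hcaus x p).2 (by rw [hp]; exact lq1)
    exact this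
  have lp2 : lightlike (x + ℓ) p := by
    have := (lightlike_map hn hbij hcaus (x + ℓ) p).2 (by rw [hp]; exact lq2)
    exact this
  have l12 : lightlike x (x + ℓ) := by
    have := lightlike_shift (x := x) hℓ hℓne (t := (1:ℝ)) one_ne_zero; simpa using this
  obtain ⟨τ, hτ⟩ := lightlike_trans_collinear l12 lp2 lp1
  have hpx : p = x + (1 + τ) • ℓ := by
    have : p - (x + ℓ) = τ • ℓ := by
      rw [hτ, show x + ℓ - x = ℓ from by abel]
    have h3 := congrArg (fun u => u + (x + ℓ)) this
    rw [show p - (x + ℓ) + (x + ℓ) = p from by abel] at h3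
    rw [h3]; module
  exact ⟨1 + τ, by rw [← hpx, hp, hq]⟩

/-- two light lines with no related pairs are parallel with orthogonal offset -/
lemma tu_converse {ℓ₁ ℓ₂ a b : Fin n → ℝ}
    (h1 : minkowskiQ ℓ₁ = 0) (h1ne : ℓ₁ ≠ 0) (h2 : minkowskiQ ℓ₂ = 0) (h2ne : ℓ₂ ≠ 0)
    (htu : ∀ s t : ℝ, ¬ related (a + s • ℓ₁) (b + t • ℓ₂)) :
    (∃ τ : ℝ, τ ≠ 0 ∧ ℓ₂ = τ • ℓ₁) ∧ mB ℓ₁ (b - a) = 0 := by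
  set d := b - a with hd
  have hB : mB ℓ₁ ℓ₂ = 0 := by
    by_contra hB
    set s := (mB d ℓ₂ - 1) / mB ℓ₁ ℓ₂ with hs
    have hkey : mB (d - s • ℓ₁) ℓ₂ = 1 := by
      rw [mB_sub_left, mB_smul_left, hs]; field_simp; ring
    set t := -(minkowskiQ (d - s • ℓ₁)) / 2 with ht
    have hdiff : minkowskiQ ((d - s • ℓ₁) + t • ℓ₂) = 0 := by
      rw [mQ_add, mQ_smul, h2, mB_smul_right, hkey, ht]; ring
    have hpts : (b + t • ℓ₂) - (a + s • ℓ₁) = (d - s • ℓ₁) + t • ℓ₂ := by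
      rw [hd]; module
    by_cases hz : (d - s • ℓ₁) + t • ℓ₂ = 0
    · -- lines intersect; use a shifted point
      apply htu s (t + 1)
      refine ⟨?_, ?_⟩
      · intro h
        have h3 : (b + (t+1) • ℓ₂) - (a + s • ℓ₁) = ℓ₂ := by
          rw [show (b + (t+1) • ℓ₂) - (a + s • ℓ₁) = ((d - s • ℓ₁) + t • ℓ₂) + ℓ₂ from by
            rw [hd]; module, hz]; abel
        rw [← h] at h3
        simp only [sub_self] at h3
        exact h2ne h3.symm
      · apply comparable_of_null
        rw [show (b + (t+1) • ℓ₂) - (a + s • ℓ₁) = ((d - s • ℓ₁) + t • ℓ₂) + ℓ₂ from by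
          rw [hd]; module, hz, zero_add]
        exact h2
    · apply htu s t
      refine ⟨?_, ?_⟩
      · intro h
        apply hz
        rw [← hpts, ← h]; abel
      · apply comparable_of_null
        rw [hpts]; exact hdiff
  have hpar : ∃ τ : ℝ, τ ≠ 0 ∧ ℓ₂ = τ • ℓ₁ := by
    have := null_parallel h2 h1 (by rw [mB_symm]; exact hB) h1ne
    refine ⟨ℓ₂ 0 / ℓ₁ 0, ?_, this⟩
    intro h0
    rw [h0, zero_smul] at this
    exact h2ne this
  refine ⟨hpar, ?_⟩
  by_contra hBd
  obtain ⟨τ, hτne, hτ⟩ := hpar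
  set c := -(minkowskiQ d) / (2 * mB d ℓ₁) with hc
  have hnull : minkowskiQ (d + c • ℓ₁) = 0 := by
    rw [mQ_add, mQ_smul, h1, mB_smul_right, hc]
    have : mB ℓ₁ d ≠ 0 := hBd
    rw [mB_symm] at this ⊢
    field_simp
    ring
  apply htu 0 (c / τ)
  have hpt : (b + (c / τ) • ℓ₂) - (a + (0:ℝ) • ℓ₁) = d + c • ℓ₁ := by
    rw [hτ, hd]
    rw [smul_smul]
    rw [div_mul_cancel₀ _ hτne]
    module
  refine ⟨?_, ?_⟩
  · intro h
    apply hBd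
    have h3 : d + c • ℓ₁ = 0 := by rw [← hpt, ← h]; abel
    have h4 : d = (-c) • ℓ₁ := by
      rw [← sub_eq_zero]
      rw [show d - (-c) • ℓ₁ = d + c • ℓ₁ from by module]
      exact h3
    rw [h4, mB_smul_right, mB_symm, ← mQ_eq_mB, h1]
    ring
  · apply comparable_of_null
    rw [hpt]
    exact hnull

end Fsection

-- chunk d2 : parallelism of image directions
section Fsection2

variable {F : (Fin n → ℝ) → (Fin n → ℝ)}

lemma not_related_of_spacelike {p q : Fin n → ℝ} (h : minkowskiQ (q - p) < 0) :
    ¬ related p q := by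
  rintro ⟨hne, hc | hc⟩
  · exact absurd hc.1 (not_le.2 h)
  · have : minkowskiQ (p - q) < 0 := by
      rw [show p - q = -(q - p) from by abel, mQ_neg]; exact h
    exact absurd hc.1 (not_le.2 this)

lemma tu_forward {a w ℓ : Fin n → ℝ} (hℓ : minkowskiQ ℓ = 0)
    (hb : mB w ℓ = 0) (hw : minkowskiQ w < 0) (s t : ℝ) :
    ¬ related (a + s • ℓ) (a + w + t • ℓ) := by
  apply not_related_of_spacelike
  rw [show a + w + t • ℓ - (a + s • ℓ) = w + (t - s) • ℓ from by module,
    mQ_add, mQ_smul, hℓ, mB_smul_right, hb]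
  linarith

lemma mdir_parallel_offset (hn : 3 ≤ n) (hbij : Function.Bijective F)
    (hcaus : ∀ x y : Fin n → ℝ, causalLE x y ↔ causalLE (F x) (F y))
    {x ℓ w : Fin n → ℝ} (hℓ : minkowskiQ ℓ = 0) (hℓne : ℓ ≠ 0)
    (hbw : mB w ℓ = 0) (hwsp : minkowskiQ w < 0) :
    (∃ τ : ℝ, τ ≠ 0 ∧ mdir F (x + w) ℓ = τ • mdir F x ℓ) ∧
      mB (mdir F x ℓ) (F (x + w) - F x) = 0 := by
  obtain ⟨h1ne, h1q⟩ := mdir_lightlike hn hbij hcaus (x := x) hℓ hℓne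
  obtain ⟨h2ne, h2q⟩ := mdir_lightlike hn hbij hcaus (x := x + w) hℓ hℓne
  have htu : ∀ s t : ℝ, ¬ related (F x + s • mdir F x ℓ)
      (F (x + w) + t • mdir F (x + w) ℓ) := by
    intro s t hrel
    obtain ⟨s', hs'⟩ := line_image_onto hn hbij hcaus (x := x) hℓ hℓne s
    obtain ⟨t', ht'⟩ := line_image_onto hn hbij hcaus (x := x + w) hℓ hℓne t
    rw [← hs', ← ht'] at hrel
    rw [← related_map hbij hcaus] at hrel
    exact tu_forward hℓ hbw hwsp s' t' hrel
  exact tu_converse h1q h1ne h2q h2ne htu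

lemma mdir_shift (hn : 3 ≤ n) (hbij : Function.Bijective F)
    (hcaus : ∀ x y : Fin n → ℝ, causalLE x y ↔ causalLE (F x) (F y))
    {x ℓ : Fin n → ℝ} (hℓ : minkowskiQ ℓ = 0) (hℓne : ℓ ≠ 0) (c : ℝ) :
    ∃ τ : ℝ, τ ≠ 0 ∧ mdir F (x + c • ℓ) ℓ = τ • mdir F x ℓ := by
  obtain ⟨g1, hg1⟩ := line_image hn hbij hcaus (x := x) hℓ hℓne (c + 1)
  obtain ⟨g2, hg2⟩ := line_image hn hbij hcaus (x := x) hℓ hℓne c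
  have hkey : mdir F (x + c • ℓ) ℓ = (g1 - g2) • mdir F x ℓ := by
    have h0 : mdir F (x + c • ℓ) ℓ = F (x + (c + 1) • ℓ) - F (x + c • ℓ) := by
      unfold mdir; rw [show x + c • ℓ + ℓ = x + (c + 1) • ℓ from by module]
    rw [h0, hg1, hg2]; module
  refine ⟨g1 - g2, ?_, hkey⟩
  intro h0
  obtain ⟨hne, _⟩ := mdir_lightlike hn hbij hcaus (x := x + c • ℓ) hℓ hℓne
  rw [hkey, h0, zero_smul] at hne
  exact hne rfl

lemma preimage_hyperplane (hn : 3 ≤ n) (hbij : Function.Bijective F)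
    (hcaus : ∀ x y : Fin n → ℝ, causalLE x y ↔ causalLE (F x) (F y))
    {x ℓ z p : Fin n → ℝ} (hℓ : minkowskiQ ℓ = 0) (hℓne : ℓ ≠ 0) (hp : F p = z)
    (hz : mB (mdir F x ℓ) (z - F x) = 0) : mB ℓ (p - x) = 0 := by
  obtain ⟨hmne, hmq⟩ := mdir_lightlike hn hbij hcaus (x := x) hℓ hℓne
  set m := mdir F x ℓ with hm
  by_cases hon : ∃ t : ℝ, z - F x = t • m
  · obtain ⟨t, ht⟩ := hon
    obtain ⟨t', ht'⟩ := line_image_onto hn hbij hcaus (x := x) hℓ hℓne t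
    have hpz : F p = F (x + t' • ℓ) := by
      rw [hp, ht', ← hm, ← ht]; module
    have := hbij.injective hpz
    rw [this, show x + t' • ℓ - x = t' • ℓ from by abel, mB_smul_right, mB_symm,
      ← mQ_eq_mB, hℓ]
    ring
  · push_neg at hon
    set d := z - F x with hd
    have hdsp : minkowskiQ d < 0 := by
      apply spacelike_of_perp_null hmq hmne
      · rw [mB_symm]; exact hz
      · exact hon
    obtain ⟨p', hp'⟩ := hbij.surjective (z + m)
    have hlzp : lightlike z (z + m) := by
      have := lightlike_shift (x := z) hmq hmne (t := (1:ℝ)) one_ne_zero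
      simpa using this
    have hlpp : lightlike p p' := by
      have := (lightlike_map hn hbij hcaus p p').2 (by rw [hp, hp']; exact hlzp)
      exact this
    set ℓ' := p' - p with hℓ'
    have hℓ'q : minkowskiQ ℓ' = 0 := hlpp.2
    have hℓ'ne : ℓ' ≠ 0 := by
      intro h
      rw [hℓ'] at h
      exact hlpp.1 (sub_eq_zero.1 h).symm
    have hpℓ' : p + ℓ' = p' := by rw [hℓ']; abel
    have hmdir' : mdir F p ℓ' = m := by
      unfold mdir; rw [hpℓ', hp', hp]; abel
    have htu : ∀ s t : ℝ, ¬ related (x + s • ℓ) (p + t • ℓ') := by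
      intro s t hrel
      obtain ⟨c₁, hc₁⟩ := line_image hn hbij hcaus (x := x) hℓ hℓne s
      obtain ⟨c₂, hc₂⟩ := line_image hn hbij hcaus (x := p) hℓ'q hℓ'ne t
      rw [related_map hbij hcaus] at hrel
      rw [hc₁, hc₂, hmdir', hp] at hrel
      apply not_related_of_spacelike ?_ hrel
      rw [show z + c₂ • m - (F x + c₁ • m) = d + (c₂ - c₁) • m from by rw [hd]; module,
        mQ_add, mQ_smul, hmq, mB_smul_right, mB_symm, hz]
      linarith
    exact (tu_converse hℓ hℓne hℓ'q hℓ'ne htu).2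

lemma mdir_global_parallel (hn : 3 ≤ n) (hbij : Function.Bijective F)
    (hcaus : ∀ x y : Fin n → ℝ, causalLE x y ↔ causalLE (F x) (F y))
    {ℓ : Fin n → ℝ} (hℓ : minkowskiQ ℓ = 0) (hℓne : ℓ ≠ 0) (x y : Fin n → ℝ) :
    ∃ τ : ℝ, τ ≠ 0 ∧ mdir F y ℓ = τ • mdir F x ℓ := by
  by_cases hperp : mB (y - x) ℓ = 0
  · by_cases hpar : ∃ t : ℝ, y - x = t • ℓ
    · obtain ⟨t, ht⟩ := hpar
      have hy : y = x + t • ℓ := by rw [← ht]; abel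
      rw [hy]
      exact mdir_shift hn hbij hcaus hℓ hℓne t
    · push_neg at hpar
      have hsp : minkowskiQ (y - x) < 0 := spacelike_of_perp_null hℓ hℓne hperp hpar
      have := (mdir_parallel_offset hn hbij hcaus (x := x) (w := y - x)
        hℓ hℓne hperp hsp).1
      rwa [show x + (y - x) = y from by abel] at this
  · by_cases hppar : ∃ τ : ℝ, τ ≠ 0 ∧ mdir F y ℓ = τ • mdir F x ℓ
    · exact hppar
    · exfalso
      apply hperp
      obtain ⟨h1ne, h1q⟩ := mdir_lightlike hn hbij hcaus (x := x) hℓ hℓne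
      obtain ⟨h2ne, h2q⟩ := mdir_lightlike hn hbij hcaus (x := y) hℓ hℓne
      push_neg at hppar
      set m₁ := mdir F x ℓ with hm₁
      set m₂ := mdir F y ℓ with hm₂
      have hnp : ∀ t : ℝ, m₂ ≠ t • m₁ := by
        intro t h
        by_cases ht : t = 0
        · rw [ht, zero_smul] at h; exact h2ne h
        · exact (hppar t ht) h
      have hB : mB m₂ m₁ ≠ 0 := null_nonparallel_mB_ne h2q h1q h1ne hnp
      have hB' : mB m₁ m₂ ≠ 0 := by rw [mB_symm]; exact hB
      set z := (mB m₂ (F y) / mB m₁ m₂) • m₁ + (mB m₁ (F x) / mB m₁ m₂) • m₂ with hzdef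
      obtain ⟨p, hpz⟩ := hbij.surjective z
      have hq1 : mB m₁ m₁ = 0 := by rw [← mQ_eq_mB]; exact h1q
      have hq2 : mB m₂ m₂ = 0 := by rw [← mQ_eq_mB]; exact h2q
      have hz1 : mB m₁ (z - F x) = 0 := by
        rw [mB_sub_right, hzdef, mB_add_right, mB_smul_right, mB_smul_right, hq1]
        field_simp
        ring
      have hz2 : mB m₂ (z - F y) = 0 := by
        rw [mB_sub_right, hzdef, mB_add_right, mB_smul_right, mB_smul_right, hq2,
          show mB m₂ m₁ = mB m₁ m₂ from mB_symm _ _]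
        field_simp
        ring
      have e1 := preimage_hyperplane hn hbij hcaus (x := x) hℓ hℓne hpz hz1
      have e2 := preimage_hyperplane hn hbij hcaus (x := y) hℓ hℓne hpz hz2
      rw [mB_symm]
      rw [show y - x = (p - x) - (p - y) from by abel, mB_sub_right, e1, e2]
      ring

end Fsection2

-- chunk e1 : calculus
/-- the Minkowski form as a continuous linear map in the second slot -/
noncomputable def mBL (u : Fin n → ℝ) : (Fin n → ℝ) →L[ℝ] ℝ :=
  LinearMap.toContinuousLinearMap
    { toFun := fun v => mB u v
      map_add' := fun v w => mB_add_right u v w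
      map_smul' := fun a v => by simpa using mB_smul_right a u v }

lemma mBL_apply (u v : Fin n → ℝ) : mBL u v = mB u v := rfl

section Fcalc

variable {F : (Fin n → ℝ) → (Fin n → ℝ)}

lemma fderiv_null_dir (hn : 3 ≤ n) (hbij : Function.Bijective F)
    (hcaus : ∀ x y : Fin n → ℝ, causalLE x y ↔ causalLE (F x) (F y))
    (hC1 : ContDiff ℝ 1 F) {x ℓ : Fin n → ℝ}
    (hℓ : minkowskiQ ℓ = 0) (hℓne : ℓ ≠ 0) :
    ∃ d : ℝ, (fderiv ℝ F x) ℓ = d • mdir F x ℓ := by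
  have hdiff : Differentiable ℝ F := hC1.differentiable one_ne_zero
  obtain ⟨hmne, hmq⟩ := mdir_lightlike hn hbij hcaus (x := x) hℓ hℓne
  obtain ⟨j, hj⟩ := Function.ne_iff.1 hmne
  simp only [Pi.zero_apply] at hj
  set m := mdir F x ℓ with hm
  set D := (fderiv ℝ F x) ℓ with hD
  have hin : HasDerivAt (fun t : ℝ => x + t • ℓ) ℓ 0 := by
    simpa using ((hasDerivAt_id (0:ℝ)).smul_const ℓ).const_add x
  have hγ : HasDerivAt (fun t : ℝ => F (x + t • ℓ)) D 0 := by
    have := ((hdiff (x + (0:ℝ) • ℓ)).hasFDerivAt).comp_hasDerivAt 0 hin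
    simpa [hD, Function.comp_def] using this
  have hγj : HasDerivAt (fun t : ℝ => F (x + t • ℓ) j) (D j) 0 := by
    have := ((ContinuousLinearMap.proj (R := ℝ) (φ := fun _ : Fin n => ℝ)
      j).hasFDerivAt).comp_hasDerivAt 0 hγ
    simpa [Function.comp_def] using this
  set g : ℝ → ℝ := fun t => (F (x + t • ℓ) j - F x j) / m j with hg
  have hrep : ∀ t : ℝ, F (x + t • ℓ) = F x + g t • m := by
    intro t
    obtain ⟨c, hc⟩ := line_image hn hbij hcaus (x := x) hℓ hℓne t
    have hgt : g t = c := by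
      rw [hg]
      simp only
      rw [hc, ← hm]
      simp only [Pi.add_apply, Pi.smul_apply, smul_eq_mul]
      field_simp
      ring
    rw [hgt, ← hm] at *
    rw [hc]
  have hgd : HasDerivAt g (D j / m j) 0 := (hγj.sub_const (F x j)).div_const (m j)
  have h2 : HasDerivAt (fun t : ℝ => F x + g t • m) ((D j / m j) • m) 0 :=
    (hgd.smul_const m).const_add (F x)
  have h3 : HasDerivAt (fun t : ℝ => F (x + t • ℓ)) ((D j / m j) • m) 0 := by
    have heq : (fun t : ℝ => F x + g t • m) = fun t : ℝ => F (x + t • ℓ) :=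
      funext fun t => (hrep t).symm
    rwa [heq] at h2
  exact ⟨D j / m j, hγ.unique h3⟩

lemma theta_const (hn : 3 ≤ n) (hbij : Function.Bijective F)
    (hcaus : ∀ x y : Fin n → ℝ, causalLE x y ↔ causalLE (F x) (F y))
    {ℓ : Fin n → ℝ} (hℓ : minkowskiQ ℓ = 0) (hℓne : ℓ ≠ 0) {x y : Fin n → ℝ}
    (hxy : mB (y - x) ℓ = 0) : mB (mdir F 0 ℓ) (F y) = mB (mdir F 0 ℓ) (F x) := by
  obtain ⟨τ, hτne, hτ⟩ := mdir_global_parallel hn hbij hcaus hℓ hℓne 0 x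
  have hφq : minkowskiQ (mdir F 0 ℓ) = 0 :=
    (mdir_lightlike hn hbij hcaus (x := (0 : Fin n → ℝ)) hℓ hℓne).2
  have hφB : mB (mdir F 0 ℓ) (mdir F x ℓ) = 0 := by
    rw [hτ, mB_smul_right, ← mQ_eq_mB, hφq, mul_zero]
  by_cases hpar : ∃ t : ℝ, y - x = t • ℓ
  · obtain ⟨t, ht⟩ := hpar
    obtain ⟨c, hc⟩ := line_image hn hbij hcaus (x := x) hℓ hℓne t
    have hy : y = x + t • ℓ := by rw [← ht]; abel
    rw [hy, hc, mB_add_right, mB_smul_right, hφB, mul_zero, add_zero]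
  · push_neg at hpar
    have hsp : minkowskiQ (y - x) < 0 := spacelike_of_perp_null hℓ hℓne hxy hpar
    have hoff := (mdir_parallel_offset hn hbij hcaus (x := x) (w := y - x)
      hℓ hℓne hxy hsp).2
    rw [show x + (y - x) = y from by abel] at hoff
    rw [hτ, mB_smul_left] at hoff
    have h0 : mB (mdir F 0 ℓ) (F y - F x) = 0 := (mul_eq_zero.1 hoff).resolve_left hτne
    rw [mB_sub_right] at h0
    linarith

lemma mdir_nonparallel (hn : 3 ≤ n) (hbij : Function.Bijective F)
    (hcaus : ∀ x y : Fin n → ℝ, causalLE x y ↔ causalLE (F x) (F y))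
    {ℓ ℓ' : Fin n → ℝ} (hℓ : minkowskiQ ℓ = 0) (hℓne : ℓ ≠ 0)
    (hℓ' : minkowskiQ ℓ' = 0) (hℓ'ne : ℓ' ≠ 0)
    (hnp : ∀ t : ℝ, ℓ ≠ t • ℓ') : ∀ t : ℝ, mdir F 0 ℓ ≠ t • mdir F 0 ℓ' := by
  intro t h
  by_cases ht : t = 0
  · rw [ht, zero_smul] at h
    exact (mdir_lightlike hn hbij hcaus (x := (0 : Fin n → ℝ)) hℓ hℓne).1 h
  · obtain ⟨t', ht'⟩ := line_image_onto hn hbij hcaus (x := (0 : Fin n → ℝ)) hℓ' hℓ'ne t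
    have h1 : F ((0 : Fin n → ℝ) + ℓ) = F 0 + t • mdir F 0 ℓ' := by
      rw [show F ((0 : Fin n → ℝ) + ℓ) = F 0 + mdir F 0 ℓ from by unfold mdir; abel, h]
    have hinj := hbij.injective (h1.trans ht'.symm)
    apply hnp t'
    have h2 := congrArg (fun u => u - (0 : Fin n → ℝ)) hinj
    simpa using h2

lemma fderiv_eq_of_level (hn : 3 ≤ n) (hbij : Function.Bijective F)
    (hcaus : ∀ x y : Fin n → ℝ, causalLE x y ↔ causalLE (F x) (F y))
    (hC1 : ContDiff ℝ 1 F) {ℓ ℓ' : Fin n → ℝ}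
    (hℓ : minkowskiQ ℓ = 0) (hℓne : ℓ ≠ 0) (hℓ' : minkowskiQ ℓ' = 0) (hℓ'ne : ℓ' ≠ 0)
    (hnp : ∀ t : ℝ, ℓ ≠ t • ℓ') {x y : Fin n → ℝ} (hlev : mB ℓ' x = mB ℓ' y) :
    (fderiv ℝ F x) ℓ = (fderiv ℝ F y) ℓ := by
  have hdiff : Differentiable ℝ F := hC1.differentiable one_ne_zero
  set φ := mdir F 0 ℓ with hφ
  set φ' := mdir F 0 ℓ' with hφ'
  obtain ⟨hφne, hφq⟩ := mdir_lightlike hn hbij hcaus (x := (0 : Fin n → ℝ)) hℓ hℓne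
  obtain ⟨hφ'ne, hφ'q⟩ := mdir_lightlike hn hbij hcaus (x := (0 : Fin n → ℝ)) hℓ' hℓ'ne
  have hφnp : ∀ t : ℝ, φ ≠ t • φ' :=
    mdir_nonparallel hn hbij hcaus hℓ hℓne hℓ' hℓ'ne hnp
  have hBφ : mB φ' φ ≠ 0 := by
    have h0 := null_nonparallel_mB_ne hφq hφ'q hφ'ne hφnp
    intro h; apply h0; rw [mB_symm]; exact h
  have hl'0 : ℓ' 0 ≠ 0 := null_comp0_ne hℓ' hℓ'ne
  set β : ℝ → ℝ := fun s => mB φ' (F ((s / ℓ' 0) • ee 0)) with hβdef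
  have hbase : ∀ z : Fin n → ℝ, mB φ' (F z) = β (mB ℓ' z) := by
    intro z
    rw [hβdef]
    simp only
    rw [hφ']
    apply theta_const hn hbij hcaus hℓ' hℓ'ne
    rw [mB_sub_left, mB_smul_left, mB_symm (ee 0) ℓ', mB_ee_zero, mB_symm]
    field_simp
    ring
  have hβd : Differentiable ℝ β := by
    have h1 : Differentiable ℝ (fun s : ℝ => (s / ℓ' 0) • ee (0 : Fin n)) := by
      have he : (fun s : ℝ => (s / ℓ' 0) • ee (0 : Fin n))
          = fun s : ℝ => s • ((ℓ' 0)⁻¹ • ee (0 : Fin n)) := by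
        funext s; rw [smul_smul, div_eq_mul_inv]
      rw [he]; exact differentiable_id.smul_const _
    have h2 : Differentiable ℝ (fun v : Fin n → ℝ => mB φ' v) := (mBL φ').differentiable
    exact (h2.comp hdiff).comp h1
  have key : ∀ z : Fin n → ℝ,
      mB φ' ((fderiv ℝ F z) ℓ) = deriv β (mB ℓ' z) * mB ℓ' ℓ := by
    intro z
    have hin : HasDerivAt (fun t : ℝ => z + t • ℓ) ℓ 0 := by
      simpa using ((hasDerivAt_id (0:ℝ)).smul_const ℓ).const_add z
    have hγ : HasDerivAt (fun t : ℝ => F (z + t • ℓ)) ((fderiv ℝ F z) ℓ) 0 := by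
      have := ((hdiff (z + (0:ℝ) • ℓ)).hasFDerivAt).comp_hasDerivAt 0 hin
      simpa [Function.comp_def] using this
    have hL : HasDerivAt (fun t : ℝ => mB φ' (F (z + t • ℓ)))
        (mB φ' ((fderiv ℝ F z) ℓ)) 0 := by
      have := ((mBL φ').hasFDerivAt).comp_hasDerivAt 0 hγ
      simpa [mBL_apply, Function.comp_def] using this
    have hiner : HasDerivAt (fun t : ℝ => mB ℓ' z + t * mB ℓ' ℓ) (mB ℓ' ℓ) 0 := by
      simpa using ((hasDerivAt_id (0:ℝ)).mul_const (mB ℓ' ℓ)).const_add (mB ℓ' z)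
    have hR : HasDerivAt (fun t : ℝ => β (mB ℓ' z + t * mB ℓ' ℓ))
        (deriv β (mB ℓ' z) * mB ℓ' ℓ) 0 := by
      have hout : HasDerivAt β (deriv β (mB ℓ' z + 0 * mB ℓ' ℓ)) (mB ℓ' z + 0 * mB ℓ' ℓ) :=
        (hβd _).hasDerivAt
      have := hout.comp 0 hiner
      simpa [Function.comp_def] using this
    have heq : (fun t : ℝ => mB φ' (F (z + t • ℓ)))
        = fun t : ℝ => β (mB ℓ' z + t * mB ℓ' ℓ) := by
      funext t
      rw [hbase (z + t • ℓ), mB_add_right, mB_smul_right]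
    rw [heq] at hL
    exact hL.unique hR
  obtain ⟨dx, hdx⟩ := fderiv_null_dir hn hbij hcaus hC1 (x := x) hℓ hℓne
  obtain ⟨dy, hdy⟩ := fderiv_null_dir hn hbij hcaus hC1 (x := y) hℓ hℓne
  obtain ⟨τx, hτxne, hτx⟩ := mdir_global_parallel hn hbij hcaus hℓ hℓne 0 x
  obtain ⟨τy, hτyne, hτy⟩ := mdir_global_parallel hn hbij hcaus hℓ hℓne 0 y
  have ex : (fderiv ℝ F x) ℓ = (dx * τx) • φ := by rw [hdx, hτx, smul_smul, hφ]
  have ey : (fderiv ℝ F y) ℓ = (dy * τy) • φ := by rw [hdy, hτy, smul_smul, hφ]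
  have h1 := key x
  have h2 := key y
  rw [ex, mB_smul_right] at h1
  rw [ey, mB_smul_right] at h2
  rw [hlev] at h1
  have hmul : dx * τx = dy * τy := mul_right_cancel₀ hBφ (h1.trans h2.symm)
  rw [ex, ey, hmul]

lemma fderiv_eq_null (hn : 3 ≤ n) (hbij : Function.Bijective F)
    (hcaus : ∀ x y : Fin n → ℝ, causalLE x y ↔ causalLE (F x) (F y))
    (hC1 : ContDiff ℝ 1 F) {ℓ ℓ' ℓ'' : Fin n → ℝ}
    (hℓ : minkowskiQ ℓ = 0) (hℓne : ℓ ≠ 0)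
    (hq' : minkowskiQ ℓ' = 0) (hne' : ℓ' ≠ 0)
    (hq'' : minkowskiQ ℓ'' = 0) (hne'' : ℓ'' ≠ 0)
    (h1 : ∀ t : ℝ, ℓ ≠ t • ℓ') (h2 : ∀ t : ℝ, ℓ ≠ t • ℓ'')
    (h3 : ∀ t : ℝ, ℓ' ≠ t • ℓ'') (x y : Fin n → ℝ) :
    (fderiv ℝ F x) ℓ = (fderiv ℝ F y) ℓ := by
  have hB : mB ℓ' ℓ'' ≠ 0 := null_nonparallel_mB_ne hq' hq'' hne'' h3
  set z := (mB ℓ'' y / mB ℓ' ℓ'') • ℓ' + (mB ℓ' x / mB ℓ' ℓ'') • ℓ'' with hz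
  have hq'B : mB ℓ' ℓ' = 0 := by rw [← mQ_eq_mB]; exact hq'
  have hq''B : mB ℓ'' ℓ'' = 0 := by rw [← mQ_eq_mB]; exact hq''
  have hz1 : mB ℓ' z = mB ℓ' x := by
    rw [hz, mB_add_right, mB_smul_right, mB_smul_right, hq'B]
    field_simp
    ring
  have hz2 : mB ℓ'' z = mB ℓ'' y := by
    rw [hz, mB_add_right, mB_smul_right, mB_smul_right, hq''B,
      show mB ℓ'' ℓ' = mB ℓ' ℓ'' from mB_symm _ _]
    field_simp
    ring
  calc (fderiv ℝ F x) ℓ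
      = (fderiv ℝ F z) ℓ :=
        fderiv_eq_of_level hn hbij hcaus hC1 hℓ hℓne hq' hne' h1 hz1.symm
    _ = (fderiv ℝ F y) ℓ :=
        fderiv_eq_of_level hn hbij hcaus hC1 hℓ hℓne hq'' hne'' h2 hz2

end Fcalc

-- chunk e2 : assembly
lemma mQ_sub (u v : Fin n → ℝ) :
    minkowskiQ (u - v) = minkowskiQ u + minkowskiQ v - 2 * mB u v := by
  rw [sub_eq_add_neg, mQ_add, mQ_neg, mB_neg_right]; ring

lemma mB_ee0_ee {i : Fin n} (hi : i ≠ 0) : mB (ee 0) (ee i) = 0 := by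
  rw [mB_ee, if_neg hi, ee_apply_ne (Ne.symm hi), neg_zero]

lemma mQ_ee0_add {i : Fin n} (hi : i ≠ 0) : minkowskiQ (ee 0 + ee i) = 0 := by
  rw [mQ_add, mQ_ee_zero, mQ_ee_ne_zero hi, mB_ee0_ee hi]; ring

lemma mQ_ee0_sub {i : Fin n} (hi : i ≠ 0) : minkowskiQ (ee 0 - ee i) = 0 := by
  rw [mQ_sub, mQ_ee_zero, mQ_ee_ne_zero hi, mB_ee0_ee hi]; ring

/-- the family of null vectors `e₀ + ε eᵢ` -/
def nvec (ε : ℝ) (i : Fin n) : Fin n → ℝ := ee 0 + ε • ee i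

lemma nvec_apply (ε : ℝ) (i k : Fin n) :
    nvec ε i k = (if 0 = k then 1 else 0) + ε * (if i = k then 1 else 0) := rfl

lemma nvec_null {ε : ℝ} (hε : ε ^ 2 = 1) {i : Fin n} (hi : i ≠ 0) :
    minkowskiQ (nvec ε i) = 0 := by
  unfold nvec
  rw [mQ_add, mQ_ee_zero, mQ_smul, mQ_ee_ne_zero hi, mB_smul_right, mB_ee0_ee hi, hε]
  ring

lemma nvec_ne_zero (ε : ℝ) {i : Fin n} (hi : i ≠ 0) : nvec ε i ≠ 0 := by
  intro h
  have := congrFun h 0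
  rw [nvec_apply, if_pos rfl, if_neg hi] at this
  simp at this

lemma nvec_nonpar {ε δ : ℝ} (hε : ε ^ 2 = 1) {i j : Fin n} (hi : i ≠ 0) (hj : j ≠ 0)
    (hd : i ≠ j ∨ ε ≠ δ) (t : ℝ) : nvec ε i ≠ t • nvec δ j := by
  intro h
  have hv0 : nvec ε i 0 = 1 := by rw [nvec_apply, if_pos rfl, if_neg hi]; ring
  have hw0 : nvec δ j 0 = 1 := by rw [nvec_apply, if_pos rfl, if_neg hj]; ring
  have hvi : nvec ε i i = ε := by
    rw [nvec_apply, if_neg (Ne.symm hi), if_pos rfl]; ring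
  have hwi : nvec δ j i = δ * (if j = i then 1 else 0) := by
    rw [nvec_apply, if_neg (Ne.symm hi)]; ring
  have h0 := congrFun h 0
  rw [hv0, Pi.smul_apply, hw0, smul_eq_mul, mul_one] at h0
  have hii := congrFun h i
  rw [hvi, Pi.smul_apply, hwi, smul_eq_mul] at hii
  by_cases hij : i = j
  · have hεδ : ε ≠ δ := hd.resolve_left (fun hne => hne hij)
    rw [if_pos hij.symm, ← h0] at hii
    apply hεδ
    linarith [hii]
  · rw [if_neg (fun hh : j = i => hij hh.symm), ← h0] at hii
    have hez : ε = 0 := by linarith [hii]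
    rw [hez] at hε
    norm_num at hε

section Fmain

variable {F : (Fin n → ℝ) → (Fin n → ℝ)}

lemma fderiv_eq_nvec (hn : 3 ≤ n) (hbij : Function.Bijective F)
    (hcaus : ∀ x y : Fin n → ℝ, causalLE x y ↔ causalLE (F x) (F y))
    (hC1 : ContDiff ℝ 1 F) {i : Fin n} (hi : i ≠ 0) {ε : ℝ} (hε : ε ^ 2 = 1)
    (x : Fin n → ℝ) : (fderiv ℝ F x) (nvec ε i) = (fderiv ℝ F 0) (nvec ε i) := by
  have h1n : (1 : ℕ) < n := by omega
  have h2n : (2 : ℕ) < n := by omega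
  set i₁ : Fin n := ⟨1, h1n⟩ with hi₁def
  set i₂ : Fin n := ⟨2, h2n⟩ with hi₂def
  have hi₁0 : i₁ ≠ 0 := by
    intro h; have := congrArg Fin.val h; simp [hi₁def] at this
  have hi₂0 : i₂ ≠ 0 := by
    intro h; have := congrArg Fin.val h; simp [hi₂def] at this
  have hi₁₂ : i₁ ≠ i₂ := by
    intro h; have := congrArg Fin.val h; simp [hi₁def, hi₂def] at this
  set j : Fin n := if i = i₁ then i₂ else i₁ with hj
  have hj0 : j ≠ 0 := by
    rw [hj]; split_ifs with h
    · exact hi₂0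
    · exact hi₁0
  have hji : i ≠ j := by
    rw [hj]; split_ifs with h
    · rw [h]; exact hi₁₂
    · exact h
  exact fderiv_eq_null hn hbij hcaus hC1 (nvec_null hε hi) (nvec_ne_zero ε hi)
    (nvec_null (by norm_num) hj0) (nvec_ne_zero 1 hj0)
    (nvec_null (by norm_num) hj0) (nvec_ne_zero (-1) hj0)
    (nvec_nonpar hε hi hj0 (Or.inl hji))
    (nvec_nonpar hε hi hj0 (Or.inl hji))
    (nvec_nonpar (by norm_num) hj0 hj0 (Or.inr (by norm_num))) x 0

lemma fderiv_all (hn : 3 ≤ n) (hbij : Function.Bijective F)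
    (hcaus : ∀ x y : Fin n → ℝ, causalLE x y ↔ causalLE (F x) (F y))
    (hC1 : ContDiff ℝ 1 F) (x v : Fin n → ℝ) :
    (fderiv ℝ F x) v = (fderiv ℝ F 0) v := by
  have h1n : (1 : ℕ) < n := by omega
  set i₁ : Fin n := ⟨1, h1n⟩ with hi₁def
  have hi₁0 : i₁ ≠ 0 := by
    intro h; have := congrArg Fin.val h; simp [hi₁def] at this
  have hee0 : (fderiv ℝ F x) (ee 0) = (fderiv ℝ F 0) (ee 0) := by
    have e1 := fderiv_eq_nvec hn hbij hcaus hC1 hi₁0 (by norm_num : (1:ℝ)^2 = 1) x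
    have e2 := fderiv_eq_nvec hn hbij hcaus hC1 hi₁0 (by norm_num : (-1:ℝ)^2 = 1) x
    have hdecomp : (ee 0 : Fin n → ℝ)
        = (1/2 : ℝ) • nvec 1 i₁ + (1/2 : ℝ) • nvec (-1) i₁ := by
      unfold nvec; module
    rw [hdecomp, map_add, map_add, map_smul, map_smul, map_smul, map_smul, e1, e2]
  have heei : ∀ i : Fin n, i ≠ 0 →
      (fderiv ℝ F x) (ee i) = (fderiv ℝ F 0) (ee i) := by
    intro i hi
    have e1 := fderiv_eq_nvec hn hbij hcaus hC1 hi (by norm_num : (1:ℝ)^2 = 1) x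
    have hdecomp : (ee i : Fin n → ℝ) = nvec 1 i - ee 0 := by unfold nvec; module
    rw [hdecomp, map_sub, map_sub, e1, hee0]
  have hv : v = ∑ k, v k • ee k := by
      conv_lhs => rw [pi_eq_sum_univ v]
      rfl
  conv_lhs => rw [hv]
  conv_rhs => rw [hv]
  rw [map_sum, map_sum]
  refine Finset.sum_congr rfl fun k _ => ?_
  rw [map_smul, map_smul]
  by_cases hk : k = 0
  · rw [hk, hee0]
  · rw [heei k hk]

lemma F_affine (hn : 3 ≤ n) (hbij : Function.Bijective F)
    (hcaus : ∀ x y : Fin n → ℝ, causalLE x y ↔ causalLE (F x) (F y))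
    (hC1 : ContDiff ℝ 1 F) (x : Fin n → ℝ) :
    F x = (fderiv ℝ F 0) x + F 0 := by
  have hdiff : Differentiable ℝ F := hC1.differentiable one_ne_zero
  set T := fderiv ℝ F 0 with hT
  have h0 : ∀ z, fderiv ℝ (fun w => F w - T w) z = 0 := by
    intro z
    rw [fderiv_fun_sub (hdiff z) (T.differentiable z)]
    have h1 : fderiv ℝ F z = T := by
      apply ContinuousLinearMap.ext
      intro w
      exact fderiv_all hn hbij hcaus hC1 z w
    rw [h1, T.fderiv, sub_self]
  have hGd : Differentiable ℝ (fun w => F w - T w) := hdiff.sub T.differentiable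
  have hconst := is_const_of_fderiv_eq_zero hGd h0 x 0
  have hT0 : T (0 : Fin n → ℝ) = 0 := map_zero T
  rw [hT0, sub_zero] at hconst
  calc F x = (F x - T x) + T x := by abel
    _ = F 0 + T x := by rw [hconst]
    _ = T x + F 0 := by abel

theorem zeeman_main (hn : 3 ≤ n) (hbij : Function.Bijective F)
    (hC1 : ContDiff ℝ 1 F)
    (hcaus : ∀ x y : Fin n → ℝ, causalLE x y ↔ causalLE (F x) (F y)) :
    ∃ (a : ℝ) (A : Matrix (Fin n) (Fin n) ℝ) (b : Fin n → ℝ),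
      0 < a ∧ IsLorentz A ∧ 0 < A 0 0 ∧
      ∀ x : Fin n → ℝ, F x = a • A.mulVec x + b := by
  have h1n : (1 : ℕ) < n := by omega
  set i₁ : Fin n := ⟨1, h1n⟩ with hi₁def
  have hi₁0 : i₁ ≠ 0 := by
    intro h; have := congrArg Fin.val h; simp [hi₁def] at this
  set T := fderiv ℝ F 0 with hT
  have haff : ∀ x, F x = T x + F 0 := F_affine hn hbij hcaus hC1
  have hTinj : Function.Injective T := by
    intro u v h
    apply hbij.injective
    rw [haff u, haff v, h]
  -- null preservation
  have hTnull : ∀ ℓ : Fin n → ℝ, minkowskiQ ℓ = 0 → minkowskiQ (T ℓ) = 0 := by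
    intro ℓ hq
    by_cases hz : ℓ = 0
    · rw [hz, map_zero, mQ_zero]
    · obtain ⟨d, hd⟩ := fderiv_null_dir hn hbij hcaus hC1 (x := (0 : Fin n → ℝ)) hq hz
      rw [← hT] at hd
      rw [hd, mQ_smul,
        (mdir_lightlike hn hbij hcaus (x := (0 : Fin n → ℝ)) hq hz).2]
      ring
  set c := minkowskiQ (T (ee 0)) with hc
  have hdiag : ∀ i : Fin n, i ≠ 0 →
      mB (T (ee 0)) (T (ee i)) = 0 ∧ minkowskiQ (T (ee i)) = -c := by
    intro i hi
    have hp := hTnull _ (mQ_ee0_add hi)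
    have hm := hTnull _ (mQ_ee0_sub hi)
    rw [map_add, mQ_add] at hp
    rw [map_sub, mQ_sub] at hm
    constructor
    · linarith
    · linarith
  have hcross : ∀ i j : Fin n, i ≠ 0 → j ≠ 0 → i ≠ j →
      mB (T (ee i)) (T (ee j)) = 0 := by
    intro i j hi hj hij
    have hs2 : (Real.sqrt 2) ^ 2 = 2 := Real.sq_sqrt (by norm_num)
    have hbij1 : mB (ee i) (ee j) = 0 := by
      rw [mB_ee, if_neg hj, ee_apply_ne hij, neg_zero]
    have hw : minkowskiQ (Real.sqrt 2 • ee 0 + ee i + ee j) = 0 := by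
      rw [mQ_add, mQ_add, mQ_smul, mQ_ee_zero, mQ_ee_ne_zero hi, mQ_ee_ne_zero hj,
        mB_smul_left, mB_ee0_ee hi, mB_add_left, mB_smul_left, mB_ee0_ee hj, hbij1, hs2]
      ring
    have h2 := hTnull _ hw
    rw [map_add, map_add, map_smul, mQ_add, mQ_add, mQ_smul, mB_smul_left,
      mB_add_left, mB_smul_left, hs2] at h2
    have e1 := (hdiag i hi).1
    have e2 := (hdiag j hj).1
    have e3 := (hdiag i hi).2
    have e4 := (hdiag j hj).2
    rw [e1, e2, e3, e4, ← hc] at h2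
    linarith
  -- Q(Tv) = c Q(v)
  have hQT : ∀ v, minkowskiQ (T v) = c * minkowskiQ v := by
    intro v
    have hv : v = ∑ k, v k • ee k := by
      conv_lhs => rw [pi_eq_sum_univ v]
      rfl
    have hTv : T v = ∑ k, v k • T (ee k) := by
      conv_lhs => rw [hv]
      rw [map_sum]
      exact Finset.sum_congr rfl fun k _ => by rw [map_smul]
    have hexp : minkowskiQ (T v)
        = ∑ k, ∑ l, v k * (v l * mB (T (ee k)) (T (ee l))) := by
      rw [mQ_eq_mB]
      conv_lhs => rw [hTv]
      rw [mB_sum_left]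
      refine Finset.sum_congr rfl fun k _ => ?_
      rw [mB_smul_left, mB_sum_right, Finset.mul_sum]
      refine Finset.sum_congr rfl fun l _ => ?_
      rw [mB_smul_right]
    have hsingle : ∀ k : Fin n, (∑ l, v k * (v l * mB (T (ee k)) (T (ee l))))
        = v k * (v k * mB (T (ee k)) (T (ee k))) := by
      intro k
      apply Finset.sum_eq_single k
      · intro l _ hlk
        have hM : mB (T (ee k)) (T (ee l)) = 0 := by
          by_cases hk : k = 0
          · subst hk
            exact (hdiag l (fun h => hlk (h.trans rfl))).1
          · by_cases hl : l = 0
            · subst hl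
              rw [mB_symm]
              exact (hdiag k hk).1
            · exact hcross k l hk hl (fun h => hlk h.symm)
        rw [hM]; ring
      · intro h; exact absurd (Finset.mem_univ k) h
    rw [hexp]
    rw [Finset.sum_congr rfl fun k _ => hsingle k]
    rw [← Finset.add_sum_erase _ _ (Finset.mem_univ (0 : Fin n))]
    have hd0 : mB (T (ee 0)) (T (ee 0)) = c := by rw [← mQ_eq_mB, ← hc]
    have hdk : ∀ k ∈ Finset.univ.erase (0 : Fin n),
        v k * (v k * mB (T (ee k)) (T (ee k))) = -c * (v k ^ 2) := by
      intro k hk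
      have hk0 := (Finset.mem_erase.1 hk).1
      have := (hdiag k hk0).2
      rw [mQ_eq_mB] at this
      rw [this]; ring
    rw [Finset.sum_congr rfl hdk, hd0]
    unfold minkowskiQ
    rw [← Finset.mul_sum]
    ring
  -- positivity of c
  have hcone : Cone (T (ee 0)) := by
    have hle : causalLE 0 (ee (0 : Fin n)) := by
      constructor
      · rw [sub_zero, mQ_ee_zero]; norm_num
      · rw [sub_zero, ee_apply_self]; norm_num
    have himg := (hcaus 0 (ee 0)).1 hle
    have hdd : F (ee (0:Fin n)) - F 0 = T (ee 0) := by rw [haff (ee 0)]; abel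
    rw [causalLE_iff_cone, hdd] at himg
    exact himg
  have hcpos : 0 < c := by
    rcases lt_or_eq_of_le hcone.1 with h | h
    · exact h
    · exfalso
      have hq0 : minkowskiQ (T (ee 0)) = 0 := h.symm
      have hc0 : c = 0 := by rw [hc]; exact hq0
      have hvne : T (ee i₁) ≠ 0 := by
        intro h0
        have : ee i₁ = (0 : Fin n → ℝ) := hTinj (by rw [h0, map_zero])
        have := congrFun this i₁
        rw [ee_apply_self] at this
        simp at this
      have hpar := null_parallel (u := T (ee 0)) (v := T (ee i₁))
        hq0 ((hdiag i₁ hi₁0).2.trans (by rw [hc0]; ring)) (hdiag i₁ hi₁0).1 hvne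
      have : ee (0 : Fin n) = (T (ee 0) 0 / T (ee i₁) 0) • ee i₁ := by
        apply hTinj
        rw [map_smul]
        exact hpar
      have h00 := congrFun this 0
      rw [ee_apply_self] at h00
      simp only [Pi.smul_apply, smul_eq_mul] at h00
      rw [ee_apply_ne hi₁0] at h00
      simp at h00
  have h00pos : 0 < T (ee 0) 0 := by
    rcases lt_or_eq_of_le hcone.2 with h | h
    · exact h
    · exfalso
      have hle0 : minkowskiQ (T (ee 0)) ≤ 0 := by
        unfold minkowskiQ
        rw [← h]
        have := spatial_sq_nonneg (T (ee 0))
        nlinarith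
      rw [← hc] at hle0
      linarith
  set a := Real.sqrt c with ha
  have hapos : 0 < a := Real.sqrt_pos.2 hcpos
  have ha2 : a ^ 2 = c := Real.sq_sqrt (le_of_lt hcpos)
  have hane : a ≠ 0 := ne_of_gt hapos
  set A : Matrix (Fin n) (Fin n) ℝ := Matrix.of (fun i j => T (ee j) i / a) with hA
  have hAx : ∀ v : Fin n → ℝ, A.mulVec v = a⁻¹ • T v := by
    intro v
    funext i
    have hv : v = ∑ k, v k • ee k := by
      conv_lhs => rw [pi_eq_sum_univ v]
      rfl
    have hTv : T v = ∑ k, v k • T (ee k) := by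
      conv_lhs => rw [hv]
      rw [map_sum]
      exact Finset.sum_congr rfl fun k _ => by rw [map_smul]
    have hTvi : T v i = ∑ k, v k * T (ee k) i := by
      rw [hTv, Finset.sum_apply]
      exact Finset.sum_congr rfl fun k _ => rfl
    simp only [Matrix.mulVec, dotProduct, hA, Matrix.of_apply, Pi.smul_apply,
      smul_eq_mul]
    rw [hTvi, Finset.mul_sum]
    exact Finset.sum_congr rfl fun k _ => by simp only [div_eq_mul_inv]; ring
  refine ⟨a, A, F 0, hapos, ?_, ?_, ?_⟩
  · intro v
    rw [hAx, mQ_smul, hQT, ← ha2]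
    field_simp
  · show 0 < T (ee 0) 0 / a
    exact div_pos h00pos hapos
  · intro x
    rw [hAx, haff x, smul_smul, mul_inv_cancel₀ hane, one_smul]

end Fmain

end Zeeman

/-- Zeeman's theorem (with a `C¹` assumption): for `n ≥ 3`, a `C¹` bijection of
`ℝⁿ` preserving the causal relation in both directions is of the form
`x ↦ a • (A x) + b` with `a > 0` and `A` an orthochronous Lorentz matrix. -/
theorem zeeman_theorem (n : ℕ) [NeZero n] (hn : 3 ≤ n)
    (F : (Fin n → ℝ) → (Fin n → ℝ))
    (hbij : Function.Bijective F)
    (hC1 : ContDiff ℝ 1 F)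
    (hcaus : ∀ x y : Fin n → ℝ, causalLE x y ↔ causalLE (F x) (F y)) :
    ∃ (a : ℝ) (A : Matrix (Fin n) (Fin n) ℝ) (b : Fin n → ℝ),
      0 < a ∧ IsLorentz A ∧ 0 < A 0 0 ∧
      ∀ x : Fin n → ℝ, F x = a • A.mulVec x + b := by
  exact Zeeman.zeeman_main hn hbij hC1 hcaus
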